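/- arXiv:2605.15780 — 3 statements merged into one kernel-verified Lean document; each statement's English description precedes it below -/
import Mathlib

section
/- Let C be an F_q-linear rank-metric code in F_q^{n×m} of dimension k with generator tensor T (i.e., the first slice space of T equals C). Then the second slice space dimension of T equals the dimension of the sum over all M ∈ C of the column spaces of M, and the third slice space dimension equals the dimension of the sum of the row spaces. -/
open Matrix

variable {F : Type*} [Field F]

/-- Column space of a matrix: the span of its columns. -/
def colSpace {n m : ℕ} (M : Matrix (Fin n) (Fin m) F) : Submodule F (Fin n → F) :=
  Submodule.span F (Set.range Mᵀ)

lemma colSpace_le_iff {n m : ℕ} (M : Matrix (Fin n) (Fin m) F) (U : Submodule F (Fin n → F)) :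
    colSpace M ≤ U ↔ ∀ j, Mᵀ j ∈ U := by
  rw [colSpace, Submodule.span_le]
  exact ⟨fun h j => h ⟨j, rfl⟩, by rintro h _ ⟨j, rfl⟩; exact h j⟩

/-- `C(U)`: the codewords of `C` whose column space is contained in `U`. -/
def codeCU {n m : ℕ} (C : Submodule F (Matrix (Fin n) (Fin m) F))
    (U : Submodule F (Fin n → F)) : Submodule F (Matrix (Fin n) (Fin m) F) where
  carrier := {M | M ∈ C ∧ colSpace M ≤ U}
  add_mem' := by
    rintro a b ⟨haC, ha⟩ ⟨hbC, hb⟩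
    refine ⟨C.add_mem haC hbC, (colSpace_le_iff _ _).2 fun j => ?_⟩
    have h := U.add_mem ((colSpace_le_iff a U).1 ha j) ((colSpace_le_iff b U).1 hb j)
    rw [Matrix.transpose_add]; exact h
  zero_mem' := by
    exact ⟨C.zero_mem, (colSpace_le_iff _ _).2 fun j => U.zero_mem⟩
  smul_mem' := by
    rintro c a ⟨haC, ha⟩
    refine ⟨C.smul_mem c haC, (colSpace_le_iff _ _).2 fun j => ?_⟩
    have h := U.smul_mem c ((colSpace_le_iff a U).1 ha j)
    rw [Matrix.transpose_smul]; exact h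

/-- Orthogonal complement with respect to the standard (dot-product) bilinear form. -/
def perp {n : ℕ} (U : Submodule F (Fin n → F)) : Submodule F (Fin n → F) where
  carrier := {v | ∀ u ∈ U, v ⬝ᵥ u = 0}
  add_mem' := by
    intro a b ha hb u hu
    rw [add_dotProduct, ha u hu, hb u hu, add_zero]
  zero_mem' := by
    intro u hu
    rw [zero_dotProduct]
  smul_mem' := by
    intro c a ha u hu
    rw [smul_dotProduct, ha u hu, smul_zero]

/-- The minimum rank distance of a matrix code. -/
noncomputable def minRankDist {n m : ℕ} (C : Submodule F (Matrix (Fin n) (Fin m) F)) : ℕ :=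
  sInf {r : ℕ | ∃ M ∈ C, M ≠ 0 ∧ M.rank = r}

/-- The rank function of the q-polymatroid associated to a matrix rank-metric code. -/
noncomputable def rhoCode {n m : ℕ} (C : Submodule F (Matrix (Fin n) (Fin m) F))
    (U : Submodule F (Fin n → F)) : ℚ :=
  ((Module.finrank F C : ℚ) - (Module.finrank F (codeCU C (perp U)) : ℚ)) / (m : ℚ)

/-- First slice space of a 3-tensor `T ∈ F^(k×n×m)`: span of the slices obtained by fixing
the first index. -/
def sliceSpace1 {k n m : ℕ} (T : Fin k → Fin n → Fin m → F) :
    Submodule F (Matrix (Fin n) (Fin m) F) :=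
  Submodule.span F (Set.range fun l : Fin k => Matrix.of (T l))

/-- Second slice space: span of the slices obtained by fixing the second index. -/
def sliceSpace2 {k n m : ℕ} (T : Fin k → Fin n → Fin m → F) :
    Submodule F (Matrix (Fin k) (Fin m) F) :=
  Submodule.span F (Set.range fun i : Fin n => Matrix.of (fun l j => T l i j))

/-- Third slice space: span of the slices obtained by fixing the third index. -/
def sliceSpace3 {k n m : ℕ} (T : Fin k → Fin n → Fin m → F) :
    Submodule F (Matrix (Fin k) (Fin n) F) :=
  Submodule.span F (Set.range fun j : Fin m => Matrix.of (fun l i => T l i j))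

/-- Row space of a matrix: the span of its rows. -/
def rowSpace {n m : ℕ} (M : Matrix (Fin n) (Fin m) F) : Submodule F (Fin m → F) :=
  Submodule.span F (Set.range M)


lemma rowSpace_le_iff' {n m : ℕ} (M : Matrix (Fin n) (Fin m) F) (U : Submodule F (Fin m → F)) :
    rowSpace M ≤ U ↔ ∀ i, M i ∈ U := by
  rw [rowSpace, Submodule.span_le]
  exact ⟨fun h i => h ⟨i, rfl⟩, by rintro h _ ⟨i, rfl⟩; exact h i⟩

lemma sup_colSpace_span {k n m : ℕ} (f : Fin k → Matrix (Fin n) (Fin m) F) :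
    (⨆ M ∈ Submodule.span F (Set.range f), colSpace M) = ⨆ l, colSpace (f l) := by
  apply le_antisymm
  · refine iSup₂_le fun M hM => ?_
    induction hM using Submodule.span_induction with
    | mem x hx =>
      obtain ⟨l, rfl⟩ := hx
      exact le_iSup (fun l => colSpace (f l)) l
    | zero => exact (colSpace_le_iff _ _).2 fun j => Submodule.zero_mem _
    | add a b _ _ ha hb =>
      refine (colSpace_le_iff _ _).2 fun j => ?_
      have := Submodule.add_mem _ ((colSpace_le_iff a _).1 ha j) ((colSpace_le_iff b _).1 hb j)
      rw [Matrix.transpose_add]; exact this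
    | smul c a _ ha =>
      refine (colSpace_le_iff _ _).2 fun j => ?_
      have := Submodule.smul_mem _ c ((colSpace_le_iff a _).1 ha j)
      rw [Matrix.transpose_smul]; exact this
  · refine iSup_le fun l => ?_
    exact le_iSup₂ (f := fun M (_ : M ∈ Submodule.span F (Set.range f)) => colSpace M) (f l)
      (Submodule.subset_span (Set.mem_range_self l))

lemma sup_rowSpace_span {k n m : ℕ} (f : Fin k → Matrix (Fin n) (Fin m) F) :
    (⨆ M ∈ Submodule.span F (Set.range f), rowSpace M) = ⨆ l, rowSpace (f l) := by
  apply le_antisymm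
  · refine iSup₂_le fun M hM => ?_
    induction hM using Submodule.span_induction with
    | mem x hx =>
      obtain ⟨l, rfl⟩ := hx
      exact le_iSup (fun l => rowSpace (f l)) l
    | zero => exact (rowSpace_le_iff' _ _).2 fun i => Submodule.zero_mem _
    | add a b _ _ ha hb =>
      refine (rowSpace_le_iff' _ _).2 fun i => ?_
      exact Submodule.add_mem _ ((rowSpace_le_iff' a _).1 ha i) ((rowSpace_le_iff' b _).1 hb i)
    | smul c a _ ha =>
      refine (rowSpace_le_iff' _ _).2 fun i => ?_
      exact Submodule.smul_mem _ c ((rowSpace_le_iff' a _).1 ha i)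
  · refine iSup_le fun l => ?_
    exact le_iSup₂ (f := fun M (_ : M ∈ Submodule.span F (Set.range f)) => rowSpace M) (f l)
      (Submodule.subset_span (Set.mem_range_self l))

/-- Row rank equals column rank, phrased via spans. -/
lemma finrank_span_range_eq_transpose {α β : Type*} [Fintype α] [Fintype β]
    (A : Matrix α β F) :
    Module.finrank F (Submodule.span F (Set.range A)) =
      Module.finrank F (Submodule.span F (Set.range Aᵀ)) := by
  exact (Matrix.rank_eq_finrank_span_row A).symm.trans (Matrix.rank_eq_finrank_span_cols A)

/-- Key lemma: the finrank of the second slice space equals the finrank of the sup of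
column spaces of the first slices. -/
lemma finrank_sliceSpace2_eq {k n m : ℕ} (T : Fin k → Fin n → Fin m → F) :
    Module.finrank F (sliceSpace2 T) =
      Module.finrank F ↥(⨆ l, colSpace (Matrix.of (T l))) := by
  classical
  set A : Matrix (Fin n) (Fin k × Fin m) F := Matrix.of fun i lj => T lj.1 i lj.2 with hA
  have hcols : Submodule.span F (Set.range Aᵀ) = ⨆ l, colSpace (Matrix.of (T l)) := by
    have hr : Set.range Aᵀ = ⋃ l, Set.range (Matrix.of (T l))ᵀ := by
      ext v
      simp only [Set.mem_range, Set.mem_iUnion]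
      constructor
      · rintro ⟨⟨l, j⟩, rfl⟩; exact ⟨l, j, rfl⟩
      · rintro ⟨l, j, rfl⟩; exact ⟨(l, j), rfl⟩
    rw [hr, Submodule.span_iUnion]
    rfl
  have hrows : Submodule.map (show
      (Fin k × Fin m → F) ≃ₗ[F] Matrix (Fin k) (Fin m) F from LinearEquiv.curry F F (Fin k) (Fin m)).toLinearMap
      (Submodule.span F (Set.range A)) = sliceSpace2 T := by
    rw [Submodule.map_span]
    congr 1
    ext M
    simp only [Set.mem_image, Set.mem_range]
    constructor
    · rintro ⟨_, ⟨i, rfl⟩, rfl⟩; exact ⟨i, rfl⟩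
    · rintro ⟨i, rfl⟩; exact ⟨_, ⟨i, rfl⟩, rfl⟩
  calc Module.finrank F (sliceSpace2 T)
      = Module.finrank F (Submodule.span F (Set.range A)) := by
        rw [← hrows]
        exact LinearEquiv.finrank_map_eq _ _
    _ = Module.finrank F (Submodule.span F (Set.range Aᵀ)) :=
        finrank_span_range_eq_transpose A
    _ = Module.finrank F ↥(⨆ l, colSpace (Matrix.of (T l))) := by rw [hcols]

/-- for a generator tensor `T` of `C`, the second slice space dimension equals
the dimension of the sum of column spaces of codewords, and the third slice space dimension
equals the dimension of the sum of row spaces. -/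
theorem slice_space_dims [Fintype F] {k n m : ℕ}
    (C : Submodule F (Matrix (Fin n) (Fin m) F))
    (hdim : Module.finrank F C = k)
    (T : Fin k → Fin n → Fin m → F) (hT : sliceSpace1 T = C) :
    Module.finrank F (sliceSpace2 T) = Module.finrank F ↥(⨆ M ∈ C, colSpace M) ∧
    Module.finrank F (sliceSpace3 T) = Module.finrank F ↥(⨆ M ∈ C, rowSpace M) := by
  classical
  subst hT
  constructor
  · rw [finrank_sliceSpace2_eq T, sliceSpace1, sup_colSpace_span]
  · have h3 : sliceSpace3 T = sliceSpace2 (fun l j i => T l i j) := rfl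
    rw [h3, finrank_sliceSpace2_eq, sliceSpace1, sup_rowSpace_span]
    rfl
end

section
/- Let C ⊆ F_q^{n×m} be an F_q-linear rank-metric code of dimension k with generator tensor T, let M be the associated q-polymatroid with rank function ρ_C(U) = (k - dim C(U^⊥))/m, and let u_1, ..., u_N be representatives of the one-dimensional subspaces of F_q^n (N = (q^n - 1)/(q - 1)). For a subset A of projective points with representatives u_{i_1},...,u_{i_s}, the rank of the span ⟨u_{i_1},...,u_{i_s}⟩ under ρ_C equals (1/m)·dim of the F_q-row space of the concatenated block matrix (m_2(u_{i_1},T) | ... | m_2(u_{i_s},T)). In particular, the projectivization of M is the polymatroid induced by the extended additive Hamming-metric code of C. -/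
open Matrix

variable {F : Type*} [Field F]

/-- Contraction map: `M ↦ (p ↦ ∑ i, u p.1 i * M i p.2)`. -/
def contractMap {n m s : ℕ} (u : Fin s → Fin n → F) :
    Matrix (Fin n) (Fin m) F →ₗ[F] (Fin s × Fin m → F) where
  toFun M := fun p => ∑ i, u p.1 i * M i p.2
  map_add' a b := by
    funext p
    simp [Matrix.add_apply, mul_add, Finset.sum_add_distrib]
  map_smul' c a := by
    funext p
    simp [Matrix.smul_apply, Finset.mul_sum, mul_left_comm]

lemma mem_perp_span_iff {n s : ℕ} (u : Fin s → Fin n → F) (v : Fin n → F) :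
    v ∈ perp (Submodule.span F (Set.range u)) ↔ ∀ p, v ⬝ᵥ u p = 0 := by
  constructor
  · intro h p
    exact h (u p) (Submodule.subset_span ⟨p, rfl⟩)
  · intro h w hw
    induction hw using Submodule.span_induction with
    | mem x hx => obtain ⟨p, rfl⟩ := hx; exact h p
    | zero => simp
    | add x y _ _ hx hy => rw [dotProduct_add, hx, hy, add_zero]
    | smul c x _ hx => rw [dotProduct_smul, hx, smul_zero]

lemma codeCU_eq_inf_ker {n m s : ℕ} (C : Submodule F (Matrix (Fin n) (Fin m) F))
    (u : Fin s → Fin n → F) :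
    codeCU C (perp (Submodule.span F (Set.range u))) =
      C ⊓ LinearMap.ker (contractMap u) := by
  ext M
  have : M ∈ codeCU C (perp (Submodule.span F (Set.range u))) ↔
      M ∈ C ∧ colSpace M ≤ perp (Submodule.span F (Set.range u)) := Iff.rfl
  rw [this, Submodule.mem_inf, LinearMap.mem_ker, colSpace_le_iff]
  refine and_congr_right fun _ => ?_
  constructor
  · intro h
    funext p
    have := (mem_perp_span_iff u (Mᵀ p.2)).1 (h p.2) p.1
    simpa [contractMap, dotProduct, mul_comm] using this
  · intro h j
    rw [mem_perp_span_iff]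
    intro p
    have := congrFun h (p, j)
    simpa [contractMap, dotProduct, mul_comm] using this

/-- the rank (under `ρ_C`) of the span of representatives `u_1, ..., u_s` equals
`(1/m)` times the dimension of the row space of the concatenated block matrix
`(m_2(u_1,T) | ... | m_2(u_s,T))`; i.e. the projectivization of `M[C]` is the polymatroid
induced by the extended additive Hamming-metric code of `C`. -/
theorem projectivization_rank [Fintype F] {k n m : ℕ} (hm : 0 < m)
    (C : Submodule F (Matrix (Fin n) (Fin m) F))
    (hdim : Module.finrank F C = k)
    (T : Fin k → Fin n → Fin m → F) (hT : sliceSpace1 T = C) :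
    ∀ (s : ℕ) (u : Fin s → (Fin n → F)),
      rhoCode C (Submodule.span F (Set.range u)) =
        (Module.finrank F (Submodule.span F (Set.range
          (fun l : Fin k => fun p : Fin s × Fin m => ∑ i, u p.1 i * T l i p.2))) : ℚ) / m := by
  intro s u
  set Φ := contractMap (m := m) u with hΦ
  -- The target span is the image of C under Φ.
  have hspan : Submodule.span F (Set.range
      (fun l : Fin k => fun p : Fin s × Fin m => ∑ i, u p.1 i * T l i p.2)) =
      Submodule.map Φ C := by
    rw [← hT, sliceSpace1, Submodule.map_span, ← Set.range_comp]
    rfl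
  -- Rank-nullity for Φ restricted to C.
  haveI : FiniteDimensional F (Matrix (Fin n) (Fin m) F) := by
    infer_instance
  have hrn := LinearMap.finrank_range_add_finrank_ker (Φ.comp C.subtype)
  have hrange : LinearMap.range (Φ.comp C.subtype) = Submodule.map Φ C := by
    rw [LinearMap.range_comp, Submodule.range_subtype]
  have hker : Module.finrank F (LinearMap.ker (Φ.comp C.subtype)) =
      Module.finrank F (codeCU C (perp (Submodule.span F (Set.range u)))) := by
    rw [codeCU_eq_inf_ker]
    have hk : LinearMap.ker (Φ.comp C.subtype) =
        Submodule.comap C.subtype (C ⊓ LinearMap.ker Φ) := by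
      ext x
      simp [LinearMap.mem_ker, Submodule.mem_comap, x.2]
    rw [hk]
    exact LinearEquiv.finrank_eq (Submodule.comapSubtypeEquivOfLe inf_le_left)
  rw [hrange, hker] at hrn
  rw [rhoCode, hspan]
  have : (Module.finrank F C : ℚ) =
      (Module.finrank F (Submodule.map Φ C) : ℚ) +
      (Module.finrank F (codeCU C (perp (Submodule.span F (Set.range u)))) : ℚ) := by
    exact_mod_cast hrn.symm
  rw [this]
  ring
end

section
/- Let M = (L(E), ρ) be a q-matroid on E = F_q^n and let B = {v_1,...,v_n} be a basis of E. Define r : 2^B → Z by r(A) = ρ(span of A). Then (B, r) is a matroid, i.e., r satisfies: 0 ≤ r(A) ≤ |A|; A ⊆ B' implies r(A) ≤ r(B'); and r(A ∪ B') + r(A ∩ B') ≤ r(A) + r(B') for all A, B' ⊆ B. -/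
open Matrix

variable {F : Type*} [Field F]

set_option linter.unusedSectionVars false in
lemma finrank_span_basis_image [Field F] {n : ℕ} (b : Module.Basis (Fin n) F (Fin n → F))
    (A : Finset (Fin n)) :
    Module.finrank F (Submodule.span F (⇑b '' (A : Set (Fin n)))) = A.card := by
  rw [show ⇑b '' (A : Set (Fin n)) = Set.range (⇑b ∘ (Subtype.val : A → Fin n)) by
    rw [Set.range_comp, Subtype.range_coe]]
  rw [finrank_span_eq_card (b.linearIndependent.comp _ Subtype.val_injective)]
  simp

/-- the matroid induced by a q-matroid with respect to a basis of `E`. -/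
theorem induced_matroid [Fintype F] {n : ℕ}
    (ρ : Submodule F (Fin n → F) → ℕ)
    (h1 : ∀ A : Submodule F (Fin n → F), ρ A ≤ Module.finrank F A)
    (h2 : ∀ A B : Submodule F (Fin n → F), A ≤ B → ρ A ≤ ρ B)
    (h3 : ∀ A B : Submodule F (Fin n → F), ρ (A ⊓ B) + ρ (A ⊔ B) ≤ ρ A + ρ B)
    (b : Module.Basis (Fin n) F (Fin n → F)) :
    let r : Finset (Fin n) → ℕ :=
      fun A => ρ (Submodule.span F (⇑b '' (A : Set (Fin n))))
    (∀ A : Finset (Fin n), r A ≤ A.card) ∧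
    (∀ A B : Finset (Fin n), A ⊆ B → r A ≤ r B) ∧
    (∀ A B : Finset (Fin n), r (A ∪ B) + r (A ∩ B) ≤ r A + r B) := by
  intro r
  refine ⟨fun A => ?_, fun A B hAB => ?_, fun A B => ?_⟩
  · calc r A ≤ Module.finrank F (Submodule.span F (⇑b '' (A : Set (Fin n)))) := h1 _
      _ = A.card := finrank_span_basis_image b A
  · exact h2 _ _ (Submodule.span_mono (Set.image_mono (by exact_mod_cast hAB)))
  · have hsup : Submodule.span F (⇑b '' ((A ∪ B : Finset (Fin n)) : Set (Fin n))) =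
        Submodule.span F (⇑b '' (A : Set (Fin n))) ⊔ Submodule.span F (⇑b '' (B : Set (Fin n))) := by
      rw [Finset.coe_union, Set.image_union, Submodule.span_union]
    have hinf : Submodule.span F (⇑b '' ((A ∩ B : Finset (Fin n)) : Set (Fin n))) ≤
        Submodule.span F (⇑b '' (A : Set (Fin n))) ⊓ Submodule.span F (⇑b '' (B : Set (Fin n))) := by
      rw [Finset.coe_inter]
      exact le_inf (Submodule.span_mono (Set.image_mono Set.inter_subset_left))
        (Submodule.span_mono (Set.image_mono Set.inter_subset_right))
    calc r (A ∪ B) + r (A ∩ B)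
        ≤ ρ (Submodule.span F (⇑b '' (A : Set (Fin n))) ⊔ Submodule.span F (⇑b '' (B : Set (Fin n))))
          + ρ (Submodule.span F (⇑b '' (A : Set (Fin n))) ⊓ Submodule.span F (⇑b '' (B : Set (Fin n)))) := by
          simp only [r]; rw [hsup]; exact Nat.add_le_add le_rfl (h2 _ _ hinf)
      _ ≤ ρ _ + ρ _ := by rw [Nat.add_comm]; exact h3 _ _
end
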